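/- arXiv:1709.07797 — 6 statements merged into one kernel-verified Lean document; each statement's English description precedes it below -/
import Mathlib

section
/- For any finite point set P in ℝ^d and all s, p ∈ P, the nearest-neighbor geodesic distance is at most the edge-squared distance: d_N(s,p) ≤ d₂(s,p). -/
open scoped BigOperators
open MeasureTheory

noncomputable section

/-- Points of `ℝ^d`. -/
abbrev Pt (d : ℕ) : Type := EuclideanSpace ℝ (Fin d)

/-- The edge-squared metric on a point set `P ⊆ ℝ^d`: the infimum over finite chains of points
of `P` from `a` to `b` of the sum of squared Euclidean lengths of the steps. -/
noncomputable def edgeSq {d : ℕ} (P : Set (Pt d)) (a b : Pt d) : ℝ :=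
  sInf {c : ℝ | ∃ (k : ℕ) (p : Fin (k + 1) → Pt d), p 0 = a ∧ p (Fin.last k) = b ∧
    (∀ i, p i ∈ P) ∧ c = ∑ i : Fin k, ‖p i.succ - p i.castSucc‖ ^ 2}

/-- A path `γ : [0,1] → ℝ^d` is piecewise-C¹ if it is continuous on `[0,1]` and there is a
partition `0 = t₀ < t₁ < ⋯ < t_m = 1` such that `γ` is `C¹` on each subinterval. -/
def PiecewiseC1 {d : ℕ} (γ : ℝ → Pt d) : Prop :=
  ContinuousOn γ (Set.Icc 0 1) ∧
  ∃ (m : ℕ) (t : Fin (m + 1) → ℝ), StrictMono t ∧ t 0 = 0 ∧ t (Fin.last m) = 1 ∧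
    ∀ i : Fin m, ContDiffOn ℝ 1 γ (Set.Icc (t i.castSucc) (t i.succ))

/-- The nearest-neighbor length of a path: `ℓ(γ) = ∫₀¹ r_P(γ(t)) ‖γ'(t)‖ dt`, where
`r_P(z) = min_{x ∈ P} ‖x - z‖` is the distance to the nearest point of `P`. -/
noncomputable def nnLength {d : ℕ} (P : Set (Pt d)) (γ : ℝ → Pt d) : ℝ :=
  ∫ t in (0:ℝ)..1, Metric.infDist (γ t) P * ‖deriv γ t‖

/-- The nearest-neighbor geodesic distance:
`d_N(a,b) = 4 ⬝ inf { ℓ(γ) | γ piecewise-C¹ path from a to b }`. -/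
noncomputable def nnGeo {d : ℕ} (P : Set (Pt d)) (a b : Pt d) : ℝ :=
  4 * sInf {l : ℝ | ∃ γ : ℝ → Pt d, PiecewiseC1 γ ∧ γ 0 = a ∧ γ 1 = b ∧ l = nnLength P γ}

lemma nnLength_nonneg {d : ℕ} (P : Set (Pt d)) (γ : ℝ → Pt d) : 0 ≤ nnLength P γ :=
  intervalIntegral.integral_nonneg (by norm_num)
    (fun u _ => mul_nonneg Metric.infDist_nonneg (norm_nonneg _))

lemma integral_min_eq : ∫ x in (0:ℝ)..1, min x (1-x) = 1/4 := by
  have hi : Continuous fun x : ℝ => min x (1-x) :=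
    continuous_id.min (continuous_const.sub continuous_id)
  have h1 : ∫ x in (0:ℝ)..(1/2:ℝ), min x (1-x) = ∫ x in (0:ℝ)..(1/2:ℝ), x := by
    apply intervalIntegral.integral_congr
    intro x hx
    rw [Set.uIcc_of_le (by norm_num)] at hx
    exact min_eq_left (by obtain ⟨h0, h2⟩ := hx; linarith)
  have h2 : ∫ x in (1/2:ℝ)..1, min x (1-x) = ∫ x in (1/2:ℝ)..1, (1-x) := by
    apply intervalIntegral.integral_congr
    intro x hx
    rw [Set.uIcc_of_le (by norm_num)] at hx
    exact min_eq_right (by obtain ⟨h0, h2⟩ := hx; linarith)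
  have hadd := intervalIntegral.integral_add_adjacent_intervals
    (a := (0:ℝ)) (b := 1/2) (c := 1) (μ := volume)
    (hi.intervalIntegrable _ _) (hi.intervalIntegrable _ _)
  rw [← hadd, h1, h2, integral_id,
    intervalIntegral.integral_sub intervalIntegrable_const intervalIntegral.intervalIntegrable_id,
    integral_id, intervalIntegral.integral_const]
  norm_num

lemma seg_piecewise {d : ℕ} (a b : Pt d) : PiecewiseC1 (fun t : ℝ => a + t • (b - a)) := by
  have hc : ContDiff ℝ 1 (fun t : ℝ => a + t • (b - a)) :=
    contDiff_const.add (contDiff_id.smul contDiff_const)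
  refine ⟨hc.continuous.continuousOn, 1, ![0,1], ?_, by simp, by simp [Fin.last], fun i => hc.contDiffOn⟩
  rw [Fin.strictMono_iff_lt_succ]
  intro i
  fin_cases i
  norm_num

lemma deriv_seg {d : ℕ} (a v : Pt d) (t : ℝ) :
    deriv (fun t : ℝ => a + t • v) t = v := by
  have : HasDerivAt (fun t : ℝ => a + t • v) v t := by
    simpa using (((hasDerivAt_id t).smul_const v).const_add a)
  exact this.deriv

lemma nnLength_seg_le {d : ℕ} (P : Set (Pt d)) {a b : Pt d} (ha : a ∈ P) (hb : b ∈ P) :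
    nnLength P (fun t : ℝ => a + t • (b - a)) ≤ ‖b - a‖^2/4 := by
  set v := b - a with hv
  rw [nnLength]
  simp only [deriv_seg]
  have hle : ∀ t ∈ Set.Icc (0:ℝ) 1,
      Metric.infDist (a + t • v) P * ‖v‖ ≤ min t (1-t) * ‖v‖^2 := by
    intro t ht
    obtain ⟨ht0, ht1⟩ := ht
    have h1 : Metric.infDist (a + t • v) P ≤ t * ‖v‖ := by
      calc Metric.infDist (a + t • v) P ≤ dist (a + t • v) a :=
            Metric.infDist_le_dist_of_mem ha
        _ = ‖t • v‖ := by rw [dist_eq_norm]; congr 1; abel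
        _ = t * ‖v‖ := by rw [norm_smul, Real.norm_eq_abs, abs_of_nonneg ht0]
    have h2 : Metric.infDist (a + t • v) P ≤ (1-t) * ‖v‖ := by
      calc Metric.infDist (a + t • v) P ≤ dist (a + t • v) b :=
            Metric.infDist_le_dist_of_mem hb
        _ = ‖(t - 1) • v‖ := by
            rw [dist_eq_norm, sub_smul, one_smul, hv]; congr 1; abel
        _ = (1-t) * ‖v‖ := by
            rw [norm_smul, Real.norm_eq_abs, abs_of_nonpos (by linarith), neg_sub]
    rcases le_total t (1-t) with h | h
    · rw [min_eq_left h]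
      calc Metric.infDist (a + t • v) P * ‖v‖ ≤ (t * ‖v‖) * ‖v‖ :=
            mul_le_mul_of_nonneg_right h1 (norm_nonneg v)
        _ = t * ‖v‖^2 := by ring
    · rw [min_eq_right h]
      calc Metric.infDist (a + t • v) P * ‖v‖ ≤ ((1-t) * ‖v‖) * ‖v‖ :=
            mul_le_mul_of_nonneg_right h2 (norm_nonneg v)
        _ = (1-t) * ‖v‖^2 := by ring
  have hint1 : IntervalIntegrable (fun t : ℝ => Metric.infDist (a + t • v) P * ‖v‖)
      volume 0 1 :=
    (((Metric.continuous_infDist_pt P).comp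
      (continuous_const.add (continuous_id.smul continuous_const))).mul
      continuous_const).intervalIntegrable _ _
  have hint2 : IntervalIntegrable (fun t : ℝ => min t (1-t) * ‖v‖^2) volume 0 1 :=
    ((continuous_id.min (continuous_const.sub continuous_id)).mul
      continuous_const).intervalIntegrable _ _
  calc (∫ t in (0:ℝ)..1, Metric.infDist (a + t • v) P * ‖v‖)
      ≤ ∫ t in (0:ℝ)..1, min t (1-t) * ‖v‖^2 :=
        intervalIntegral.integral_mono_on (by norm_num) hint1 hint2 hle
    _ = (∫ t in (0:ℝ)..1, min t (1-t)) * ‖v‖^2 := by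
        rw [intervalIntegral.integral_mul_const]
    _ = ‖v‖^2/4 := by rw [integral_min_eq]; ring

lemma deriv_comp_affine {d : ℕ} (f : ℝ → Pt d) (c b x : ℝ) (hc : c ≠ 0) :
    deriv (fun u => f (c*u + b)) x = c • deriv f (c*x + b) := by
  by_cases hdiff : DifferentiableAt ℝ f (c*x + b)
  · have h : HasDerivAt (fun u : ℝ => c*u + b) c x := by
      simpa using ((hasDerivAt_id x).const_mul c).add_const b
    have := (hdiff.hasDerivAt.scomp x h).deriv
    simpa [Function.comp_def] using this
  · have h1 : ¬ DifferentiableAt ℝ (fun u => f (c*u + b)) x := by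
      intro hg
      apply hdiff
      have hfeq : f = fun y => (fun u => f (c*u + b)) ((y - b)/c) := by
        funext y; congr 1; field_simp; ring
      rw [hfeq]
      have hx : (c*x + b - b)/c = x := by field_simp; ring
      have hinner : DifferentiableAt ℝ (fun y : ℝ => (y - b)/c) (c*x+b) :=
        (differentiableAt_id.sub_const b).div_const c
      have := DifferentiableAt.comp (c*x+b) (hx ▸ hg) hinner
      simpa [Function.comp_def] using this
    rw [deriv_zero_of_not_differentiableAt h1, deriv_zero_of_not_differentiableAt hdiff,
      smul_zero]

lemma exists_concat {d : ℕ} (P : Set (Pt d)) (γ₁ γ₂ : ℝ → Pt d)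
    (h₁ : PiecewiseC1 γ₁) (h₂ : PiecewiseC1 γ₂) (hj : γ₁ 1 = γ₂ 0) :
    ∃ γ : ℝ → Pt d, PiecewiseC1 γ ∧ γ 0 = γ₁ 0 ∧ γ 1 = γ₂ 1 ∧
      nnLength P γ ≤ nnLength P γ₁ + nnLength P γ₂ := by
  obtain ⟨hc₁, m₁, t₁, hm₁, h₁0, h₁1, hd₁⟩ := h₁
  obtain ⟨hc₂, m₂, t₂, hm₂, h₂0, h₂1, hd₂⟩ := h₂
  set γ : ℝ → Pt d := fun u => if u ≤ 1/2 then γ₁ (2*u) else γ₂ (2*u - 1) with hγ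
  -- basic facts about the partitions
  have hm₁pos : 0 < m₁ := by
    rcases Nat.eq_zero_or_pos m₁ with h | h
    · subst h
      rw [show Fin.last 0 = 0 from rfl, h₁0] at h₁1
      norm_num at h₁1
    · exact h
  have ht₁mem : ∀ j, t₁ j ∈ Set.Icc (0:ℝ) 1 := by
    intro j
    constructor
    · rw [← h₁0]; exact hm₁.monotone (Fin.zero_le j)
    · rw [← h₁1]; exact hm₁.monotone (Fin.le_last j)
  have ht₂mem : ∀ j, t₂ j ∈ Set.Icc (0:ℝ) 1 := by
    intro j
    constructor
    · rw [← h₂0]; exact hm₂.monotone (Fin.zero_le j)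
    · rw [← h₂1]; exact hm₂.monotone (Fin.le_last j)
  -- endpoint values
  have hEq1 : ∀ u : ℝ, u ≤ 1/2 → γ u = γ₁ (2*u) := by
    intro u hu
    show (if u ≤ 1/2 then γ₁ (2*u) else γ₂ (2*u - 1)) = γ₁ (2*u)
    rw [if_pos hu]
  have hEq2 : ∀ u : ℝ, 1/2 ≤ u → γ u = γ₂ (2*u - 1) := by
    intro u hu
    rcases eq_or_lt_of_le hu with h | h
    · rw [hEq1 u h.symm.le, ← h]
      norm_num [hj]
    · show (if u ≤ 1/2 then γ₁ (2*u) else γ₂ (2*u - 1)) = γ₂ (2*u - 1)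
      rw [if_neg (not_le.mpr h)]
  have hγ0 : γ 0 = γ₁ 0 := by rw [hEq1 0 (by norm_num)]; norm_num
  have hγ1 : γ 1 = γ₂ 1 := by rw [hEq2 1 (by norm_num)]; norm_num
  -- continuity
  have hcont : ContinuousOn γ (Set.Icc 0 1) := by
    have hA : ContinuousOn γ (Set.Icc (0:ℝ) (1/2)) := by
      apply ContinuousOn.congr (f := fun u : ℝ => γ₁ (2*u))
      · apply hc₁.comp (continuous_const.mul continuous_id).continuousOn
        intro u hu
        simp only [Set.mem_Icc, Pi.mul_apply, Pi.sub_apply, id_eq] at hu ⊢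
        constructor <;> linarith [hu.1, hu.2]
      · intro u hu; exact hEq1 u hu.2
    have hB : ContinuousOn γ (Set.Icc (1/2:ℝ) 1) := by
      apply ContinuousOn.congr (f := fun u : ℝ => γ₂ (2*u - 1))
      · apply hc₂.comp ((continuous_const.mul continuous_id).sub continuous_const).continuousOn
        intro u hu
        simp only [Set.mem_Icc, Pi.mul_apply, Pi.sub_apply, id_eq] at hu ⊢
        constructor <;> linarith [hu.1, hu.2]
      · intro u hu; exact hEq2 u hu.1
    have hunion : Set.Icc (0:ℝ) 1 = Set.Icc (0:ℝ) (1/2) ∪ Set.Icc (1/2:ℝ) 1 :=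
      (Set.Icc_union_Icc_eq_Icc (by norm_num) (by norm_num)).symm
    rw [hunion]
    intro x hx
    rcases hx with hx | hx
    · refine (hA x hx).union ?_
      by_cases hxB : x ∈ Set.Icc (1/2:ℝ) 1
      · exact hB x hxB
      · exact continuousWithinAt_of_notMem_closure
          (by rwa [IsClosed.closure_eq isClosed_Icc])
    · refine ContinuousWithinAt.union ?_ (hB x hx)
      by_cases hxA : x ∈ Set.Icc (0:ℝ) (1/2)
      · exact hA x hxA
      · exact continuousWithinAt_of_notMem_closure
          (by rwa [IsClosed.closure_eq isClosed_Icc])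
  -- the partition
  set t : Fin (m₁ + m₂ + 1) → ℝ := fun j =>
    if h : (j:ℕ) ≤ m₁ then t₁ ⟨j, by omega⟩ / 2 else (t₂ ⟨(j:ℕ) - m₁, by omega⟩ + 1) / 2
    with ht
  have htfst : ∀ (j : Fin (m₁ + m₂ + 1)) (h : (j:ℕ) ≤ m₁), t j = t₁ ⟨j, by omega⟩ / 2 := by
    intro j h; rw [ht]; simp only [dif_pos h]
  have htsnd : ∀ (j : Fin (m₁ + m₂ + 1)) (h : m₁ ≤ (j:ℕ)),
      t j = (t₂ ⟨(j:ℕ) - m₁, by omega⟩ + 1) / 2 := by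
    intro j h
    by_cases h' : (j:ℕ) ≤ m₁
    · have hje : (j:ℕ) = m₁ := le_antisymm h' h
      rw [htfst j h']
      have e1 : (⟨(j:ℕ), by omega⟩ : Fin (m₁+1)) = Fin.last m₁ := by
        apply Fin.ext; simp [hje, Fin.last]
      have e2 : (⟨(j:ℕ) - m₁, by omega⟩ : Fin (m₂+1)) = 0 := by
        apply Fin.ext; simp [hje]
      rw [e1, e2, h₁1, h₂0]
      norm_num
    · rw [ht]; simp only [dif_neg h']
  have hstrict : StrictMono t := by
    rw [Fin.strictMono_iff_lt_succ]
    intro i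
    have hcv : ((i.castSucc : Fin (m₁ + m₂ + 1)) : ℕ) = (i : ℕ) := rfl
    have hsv : ((i.succ : Fin (m₁ + m₂ + 1)) : ℕ) = (i : ℕ) + 1 := rfl
    rcases le_or_gt ((i:ℕ) + 1) m₁ with h | h
    · rw [htfst i.castSucc (by omega), htfst i.succ (by omega)]
      have : t₁ ⟨(i.castSucc : ℕ), by omega⟩ < t₁ ⟨(i.succ : ℕ), by omega⟩ := by
        apply hm₁
        simp [Fin.lt_def, hcv, hsv]
      linarith
    · rw [htsnd i.castSucc (by omega), htsnd i.succ (by omega)]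
      have : t₂ ⟨(i.castSucc : ℕ) - m₁, by omega⟩ < t₂ ⟨(i.succ : ℕ) - m₁, by omega⟩ := by
        apply hm₂
        simp only [Fin.lt_def, hcv, hsv]
        omega
      linarith
  have ht0 : t 0 = 0 := by
    rw [htfst 0 (by simp)]
    have h0 : ∀ (h : ((0 : Fin (m₁+m₂+1)) : ℕ) < m₁ + 1),
        (⟨((0 : Fin (m₁+m₂+1)) : ℕ), h⟩ : Fin (m₁+1)) = 0 := by
      intro h; rfl
    rw [h0, h₁0]; norm_num
  have htlast : t (Fin.last (m₁ + m₂)) = 1 := by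
    rw [htsnd (Fin.last (m₁ + m₂)) (by exact Nat.le_add_right m₁ m₂)]
    have hl : ∀ (h : ((Fin.last (m₁+m₂) : Fin (m₁+m₂+1)) : ℕ) - m₁ < m₂ + 1),
        (⟨((Fin.last (m₁+m₂) : Fin (m₁+m₂+1)) : ℕ) - m₁, h⟩ : Fin (m₂+1)) = Fin.last m₂ := by
      intro h; apply Fin.ext; show m₁ + m₂ - m₁ = m₂; omega
    rw [hl, h₂1]; norm_num
  -- smoothness of the pieces
  have hpieces : ∀ i : Fin (m₁ + m₂), ContDiffOn ℝ 1 γ (Set.Icc (t i.castSucc) (t i.succ)) := by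
    intro i
    have hcv : ((i.castSucc : Fin (m₁ + m₂ + 1)) : ℕ) = (i : ℕ) := rfl
    have hsv : ((i.succ : Fin (m₁ + m₂ + 1)) : ℕ) = (i : ℕ) + 1 := rfl
    rcases le_or_gt ((i:ℕ) + 1) m₁ with h | h
    · rw [htfst i.castSucc (by omega), htfst i.succ (by omega)]
      set j : Fin m₁ := ⟨(i : ℕ), by omega⟩ with hjdef
      have e1 : (⟨((i.castSucc : Fin (m₁+m₂+1)) : ℕ), by omega⟩ : Fin (m₁+1)) = j.castSucc := by
        apply Fin.ext; simp [hcv, hjdef]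
      have e2 : (⟨((i.succ : Fin (m₁+m₂+1)) : ℕ), by omega⟩ : Fin (m₁+1)) = j.succ := by
        apply Fin.ext; simp [hsv, hjdef]
      rw [e1, e2]
      apply ContDiffOn.congr (f := fun u : ℝ => γ₁ (2*u))
      · apply (hd₁ j).comp ((contDiff_const.mul contDiff_id).contDiffOn)
        intro u hu
        simp only [Set.mem_preimage, Set.mem_Icc, id_eq] at hu ⊢
        constructor <;> linarith [hu.1, hu.2]
      · intro u hu
        apply hEq1
        have hup : t₁ j.succ ≤ 1 := (ht₁mem j.succ).2
        have := hu.2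
        linarith
    · rw [htsnd i.castSucc (by omega), htsnd i.succ (by omega)]
      set j : Fin m₂ := ⟨(i : ℕ) - m₁, by omega⟩ with hjdef
      have e1 : (⟨((i.castSucc : Fin (m₁+m₂+1)) : ℕ) - m₁, by omega⟩ : Fin (m₂+1)) =
          j.castSucc := by
        apply Fin.ext; simp [hcv, hjdef]
      have e2 : (⟨((i.succ : Fin (m₁+m₂+1)) : ℕ) - m₁, by omega⟩ : Fin (m₂+1)) = j.succ := by
        apply Fin.ext; simp [hsv, hjdef]; omega
      rw [e1, e2]
      apply ContDiffOn.congr (f := fun u : ℝ => γ₂ (2*u - 1))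
      · apply (hd₂ j).comp (((contDiff_const.mul contDiff_id).sub contDiff_const).contDiffOn)
        intro u hu
        simp only [Set.mem_preimage, Set.mem_Icc, id_eq] at hu ⊢
        constructor <;> linarith [hu.1, hu.2]
      · intro u hu
        apply hEq2
        have hlow : 0 ≤ t₂ j.castSucc := (ht₂mem j.castSucc).1
        have := hu.1
        linarith
  have hPW : PiecewiseC1 γ := ⟨hcont, m₁ + m₂, t, hstrict, ht0, htlast, hpieces⟩
  refine ⟨γ, hPW, hγ0, hγ1, ?_⟩
  -- the length estimate
  set F : ℝ → ℝ := fun u => Metric.infDist (γ u) P * ‖deriv γ u‖ with hF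
  set G₁ : ℝ → ℝ := fun u => Metric.infDist (γ₁ u) P * ‖deriv γ₁ u‖ with hG₁
  set G₂ : ℝ → ℝ := fun u => Metric.infDist (γ₂ u) P * ‖deriv γ₂ u‖ with hG₂
  have hnn : nnLength P γ = ∫ u in (0:ℝ)..1, F u := rfl
  have hF1 : ∀ u : ℝ, u < 1/2 → F u = 2 * G₁ (2*u) := by
    intro u hu
    have hev : γ =ᶠ[nhds u] fun v => γ₁ (2*v + 0) := by
      filter_upwards [Iio_mem_nhds hu] with v hv
      rw [hEq1 v (le_of_lt hv)]
      norm_num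
    have hder : deriv γ u = (2:ℝ) • deriv γ₁ (2*u) := by
      rw [hev.deriv_eq, deriv_comp_affine γ₁ 2 0 u (by norm_num), add_zero]
    have hγu : γ u = γ₁ (2*u) := hEq1 u (le_of_lt hu)
    have hnorm : ‖deriv γ u‖ = 2 * ‖deriv γ₁ (2*u)‖ := by
      rw [hder, norm_smul]
      norm_num
    simp only [hF, hG₁, hγu, hnorm]
    ring
  have hF2 : ∀ u : ℝ, 1/2 < u → F u = 2 * G₂ (2*u - 1) := by
    intro u hu
    have hev : γ =ᶠ[nhds u] fun v => γ₂ (2*v + (-1)) := by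
      filter_upwards [Ioi_mem_nhds hu] with v hv
      rw [hEq2 v (le_of_lt hv)]
      norm_num [sub_eq_add_neg]
    have h2u : 2*u + (-1) = 2*u - 1 := by ring
    have hder : deriv γ u = (2:ℝ) • deriv γ₂ (2*u - 1) := by
      rw [hev.deriv_eq, deriv_comp_affine γ₂ 2 (-1) u (by norm_num), h2u]
    have hγu : γ u = γ₂ (2*u - 1) := hEq2 u (le_of_lt hu)
    have hnorm : ‖deriv γ u‖ = 2 * ‖deriv γ₂ (2*u - 1)‖ := by
      rw [hder, norm_smul]
      norm_num
    simp only [hF, hG₂, hγu, hnorm]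
    ring
  by_cases hInt : IntervalIntegrable F volume 0 1
  · have hsub1 : Set.uIcc (0:ℝ) (1/2) ⊆ Set.uIcc (0:ℝ) 1 := by
      rw [Set.uIcc_of_le (by norm_num), Set.uIcc_of_le (by norm_num)]
      exact Set.Icc_subset_Icc le_rfl (by norm_num)
    have hsub2 : Set.uIcc (1/2:ℝ) 1 ⊆ Set.uIcc (0:ℝ) 1 := by
      rw [Set.uIcc_of_le (by norm_num), Set.uIcc_of_le (by norm_num)]
      exact Set.Icc_subset_Icc (by norm_num) le_rfl
    have hI1 := hInt.mono_set hsub1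
    have hI2 := hInt.mono_set hsub2
    have hsplit := intervalIntegral.integral_add_adjacent_intervals hI1 hI2
    have hne : ∀ᵐ x : ℝ, x ≠ (1/2:ℝ) := by
      rw [MeasureTheory.ae_iff]
      convert Real.volume_singleton (a := (1/2:ℝ)) using 2
      ext x
      simp
    have e1 : (∫ u in (0:ℝ)..(1/2), F u) = nnLength P γ₁ := by
      have step1 : (∫ u in (0:ℝ)..(1/2), F u) = ∫ u in (0:ℝ)..(1/2), 2 * G₁ (2*u) := by
        apply intervalIntegral.integral_congr_ae
        filter_upwards [hne] with x hx hmem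
        rw [Set.uIoc_of_le (by norm_num)] at hmem
        exact hF1 x (lt_of_le_of_ne hmem.2 hx)
      rw [step1, intervalIntegral.integral_const_mul]
      have key := intervalIntegral.smul_integral_comp_mul_left (a := (0:ℝ)) (b := 1/2) G₁ 2
      rw [smul_eq_mul, show (2:ℝ)*0 = 0 by norm_num, show (2:ℝ)*(1/2) = 1 by norm_num] at key
      rw [key]
      rfl
    have e2 : (∫ u in (1/2:ℝ)..1, F u) = nnLength P γ₂ := by
      have step1 : (∫ u in (1/2:ℝ)..1, F u) = ∫ u in (1/2:ℝ)..1, 2 * G₂ (2*u - 1) := by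
        apply intervalIntegral.integral_congr_ae
        apply Filter.Eventually.of_forall
        intro x hmem
        rw [Set.uIoc_of_le (by norm_num)] at hmem
        exact hF2 x hmem.1
      rw [step1, intervalIntegral.integral_const_mul]
      have key := intervalIntegral.smul_integral_comp_mul_sub (a := (1/2:ℝ)) (b := 1) G₂ 2 1
      rw [smul_eq_mul, show (2:ℝ)*(1/2) - 1 = 0 by norm_num, show (2:ℝ)*1 - 1 = 1 by norm_num] at key
      rw [key]
      rfl
    rw [hnn, ← hsplit, e1, e2]
  · rw [hnn, intervalIntegral.integral_undef hInt]
    exact add_nonneg (nnLength_nonneg P γ₁) (nnLength_nonneg P γ₂)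

def pathSet {d : ℕ} (P : Set (Pt d)) (a b : Pt d) : Set ℝ :=
  {l : ℝ | ∃ γ : ℝ → Pt d, PiecewiseC1 γ ∧ γ 0 = a ∧ γ 1 = b ∧ l = nnLength P γ}

lemma seg_mem_pathSet {d : ℕ} (P : Set (Pt d)) (a b : Pt d) :
    nnLength P (fun t : ℝ => a + t • (b - a)) ∈ pathSet P a b := by
  refine ⟨_, seg_piecewise a b, by simp, by simp, rfl⟩

lemma pathSet_nonempty {d : ℕ} (P : Set (Pt d)) (a b : Pt d) : (pathSet P a b).Nonempty :=
  ⟨_, seg_mem_pathSet P a b⟩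

lemma pathSet_bddBelow {d : ℕ} (P : Set (Pt d)) (a b : Pt d) : BddBelow (pathSet P a b) := by
  refine ⟨0, ?_⟩
  rintro l ⟨γ, _, _, _, rfl⟩
  exact nnLength_nonneg P γ

lemma sInf_pathSet_le_seg {d : ℕ} (P : Set (Pt d)) {a b : Pt d} (ha : a ∈ P) (hb : b ∈ P) :
    sInf (pathSet P a b) ≤ ‖b - a‖^2/4 :=
  le_trans (csInf_le (pathSet_bddBelow P a b) (seg_mem_pathSet P a b)) (nnLength_seg_le P ha hb)

lemma sInf_pathSet_triangle {d : ℕ} (P : Set (Pt d)) (a b c : Pt d) :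
    sInf (pathSet P a c) ≤ sInf (pathSet P a b) + sInf (pathSet P b c) := by
  have key : ∀ l₁ ∈ pathSet P a b, ∀ l₂ ∈ pathSet P b c, sInf (pathSet P a c) ≤ l₁ + l₂ := by
    rintro l₁ ⟨γ₁, hp₁, h₁0, h₁1, rfl⟩ l₂ ⟨γ₂, hp₂, h₂0, h₂1, rfl⟩
    obtain ⟨γ, hp, hg0, hg1, hle⟩ := exists_concat P γ₁ γ₂ hp₁ hp₂ (h₁1.trans h₂0.symm)
    refine le_trans (csInf_le (pathSet_bddBelow P a c) ?_) hle
    exact ⟨γ, hp, hg0.trans h₁0, hg1.trans h₂1, rfl⟩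
  have h1 : ∀ l₁ ∈ pathSet P a b, sInf (pathSet P a c) - l₁ ≤ sInf (pathSet P b c) := by
    intro l₁ h₁
    apply le_csInf (pathSet_nonempty P b c)
    intro l₂ h₂
    linarith [key l₁ h₁ l₂ h₂]
  have h2 : sInf (pathSet P a c) - sInf (pathSet P b c) ≤ sInf (pathSet P a b) := by
    apply le_csInf (pathSet_nonempty P a b)
    intro l₁ h₁
    linarith [h1 l₁ h₁]
  linarith

lemma sInf_pathSet_chain {d : ℕ} (P : Set (Pt d)) :
    ∀ (k : ℕ) (q : Fin (k+1) → Pt d), (∀ i, q i ∈ P) →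
      sInf (pathSet P (q 0) (q (Fin.last k))) ≤ (∑ i : Fin k, ‖q i.succ - q i.castSucc‖^2)/4 := by
  intro k
  induction k with
  | zero =>
    intro q hq
    rw [show Fin.last 0 = 0 from rfl]
    have := sInf_pathSet_le_seg P (hq 0) (hq 0)
    simpa using this
  | succ k ih =>
    intro q hq
    have hlast : Fin.last (k+1) = (Fin.last k).succ := rfl
    have htri := sInf_pathSet_triangle P (q 0) (q (Fin.last k).castSucc) (q (Fin.last (k+1)))
    have hIH : sInf (pathSet P (q 0) (q (Fin.last k).castSucc))
        ≤ (∑ i : Fin k, ‖q i.succ.castSucc - q i.castSucc.castSucc‖^2)/4 :=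
      ih (fun j => q j.castSucc) (fun j => hq j.castSucc)
    have hseg := sInf_pathSet_le_seg P (hq (Fin.last k).castSucc) (hq (Fin.last (k+1)))
    have hsum : (∑ i : Fin (k+1), ‖q i.succ - q i.castSucc‖^2)
        = (∑ i : Fin k, ‖q i.succ.castSucc - q i.castSucc.castSucc‖^2)
          + ‖q (Fin.last (k+1)) - q (Fin.last k).castSucc‖^2 := by
      rw [Fin.sum_univ_castSucc (f := fun i : Fin (k+1) => ‖q i.succ - q i.castSucc‖^2)]
      rfl
    rw [hsum]
    linarith [htri, hIH, hseg]

/-- For any finite point set `P ⊆ ℝ^d` and all `s, p ∈ P`, the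
nearest-neighbor geodesic distance is at most the edge-squared distance. -/
theorem nnGeo_le_edgeSq (d : ℕ) (P : Set (Pt d)) (hP : P.Finite)
    (s p : Pt d) (hs : s ∈ P) (hp : p ∈ P) :
    nnGeo P s p ≤ edgeSq P s p := by
  rw [edgeSq]
  apply le_csInf
  · refine ⟨_, 1, ![s, p], rfl, rfl, ?_, rfl⟩
    intro i
    fin_cases i <;> simp [hs, hp]
  · rintro c ⟨k, q, h0, h1, hmem, rfl⟩
    have hchain := sInf_pathSet_chain P k q hmem
    rw [h0, h1] at hchain
    show 4 * sInf (pathSet P s p) ≤ _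
    linarith
end
end

section
/- If P = {a, b} consists of exactly two points in ℝ^d, then the nearest-neighbor geodesic distance between them equals the squared Euclidean distance: d_N(a,b) = ‖a − b‖². -/
open scoped BigOperators
open MeasureTheory

noncomputable section

-- auxiliary: g and its antiderivative
noncomputable def gf (c : ℝ) (u : ℝ) : ℝ := min |u| |u - c|

lemma gf_cont (c : ℝ) : Continuous (gf c) := by
  unfold gf
  exact (continuous_abs).min ((continuous_id.sub continuous_const).abs)

lemma gf_nonneg (c u : ℝ) : 0 ≤ gf c u := le_min (abs_nonneg _) (abs_nonneg _)

noncomputable def Gf (c : ℝ) (u : ℝ) : ℝ := ∫ x in (0:ℝ)..u, gf c x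

lemma Gf_hasDeriv (c u : ℝ) : HasDerivAt (Gf c) (gf c u) u :=
  intervalIntegral.integral_hasDerivAt_right ((gf_cont c).intervalIntegrable _ _)
    (gf_cont c).stronglyMeasurable.stronglyMeasurableAtFilter
    (gf_cont c).continuousAt

lemma Gf_cont (c : ℝ) : Continuous (Gf c) :=
  continuous_iff_continuousAt.2 fun u => (Gf_hasDeriv c u).continuousAt

lemma Gf_sub (c : ℝ) (hc : 0 ≤ c) : Gf c c - Gf c 0 = c ^ 2 / 4 := by
  have h0 : Gf c 0 = 0 := intervalIntegral.integral_same
  have hsplit : Gf c c = (∫ x in (0:ℝ)..(c/2), gf c x) + ∫ x in (c/2)..c, gf c x := by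
    unfold Gf
    rw [intervalIntegral.integral_add_adjacent_intervals ((gf_cont c).intervalIntegrable _ _)
      ((gf_cont c).intervalIntegrable _ _)]
  have h1 : (∫ x in (0:ℝ)..(c/2), gf c x) = ∫ x in (0:ℝ)..(c/2), x := by
    apply intervalIntegral.integral_congr
    intro x hx
    rw [Set.uIcc_of_le (by linarith)] at hx
    obtain ⟨hx0, hx1⟩ := hx
    unfold gf
    rw [abs_of_nonneg hx0, abs_of_nonpos (by linarith), min_eq_left (by linarith)]
  have h2 : (∫ x in (c/2)..c, gf c x) = ∫ x in (c/2)..c, (c - x) := by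
    apply intervalIntegral.integral_congr
    intro x hx
    rw [Set.uIcc_of_le (by linarith)] at hx
    obtain ⟨hx0, hx1⟩ := hx
    unfold gf
    rw [abs_of_nonneg (by linarith), abs_of_nonpos (by linarith), min_eq_right (by linarith)]; ring
  have h3 : (∫ x in (0:ℝ)..(c/2), x) = c^2/8 := by
    rw [integral_id]; ring
  have h4 : (∫ x in (c/2)..c, (c - x)) = c^2/8 := by
    have : (∫ x in (c/2)..c, (c - x)) = (∫ x in (c/2)..c, (c:ℝ)) - ∫ x in (c/2)..c, x :=
      intervalIntegral.integral_sub intervalIntegrable_const intervalIntegral.intervalIntegrable_id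
    rw [this, intervalIntegral.integral_const, integral_id, smul_eq_mul]
    ring
  rw [h0, hsplit, h1, h2, h3, h4]; ring

lemma infDist_pair {d : ℕ} (z x y : Pt d) :
    Metric.infDist z ({x, y} : Set (Pt d)) = min (dist z x) (dist z y) := by
  apply le_antisymm
  · exact le_min (Metric.infDist_le_dist_of_mem (by simp)) (Metric.infDist_le_dist_of_mem (by simp))
  · by_contra h
    push_neg at h
    obtain ⟨w, hw, hlt⟩ := (Metric.infDist_lt_iff ⟨x, by simp⟩).mp h
    simp only [Set.mem_insert_iff, Set.mem_singleton_iff] at hw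
    rcases hw with rfl | rfl
    · exact absurd hlt (not_lt.2 (min_le_left _ _))
    · exact absurd hlt (not_lt.2 (min_le_right _ _))

section Lower
variable {d : ℕ} (a b : Pt d)

lemma key_bound (hab : a ≠ b) (z : Pt d) :
    gf ‖b - a‖ (inner ℝ ((‖b - a‖)⁻¹ • (b - a)) (z - a) : ℝ)
      ≤ Metric.infDist z ({a, b} : Set (Pt d)) := by
  have hK : (0:ℝ) < ‖b - a‖ := by
    rw [norm_pos_iff, sub_ne_zero]; exact fun h => hab h.symm
  set K := ‖b - a‖ with hKdef
  set e : Pt d := K⁻¹ • (b - a) with he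
  have hnorme : ‖e‖ = 1 := by
    rw [he, norm_smul, norm_inv, norm_norm]
    field_simp; exact div_self hK.ne'
  rw [infDist_pair]
  apply le_min
  · calc gf K (inner ℝ e (z - a) : ℝ) ≤ |(inner ℝ e (z - a) : ℝ)| := min_le_left _ _
    _ ≤ ‖e‖ * ‖z - a‖ := abs_real_inner_le_norm _ _
    _ = dist z a := by rw [hnorme, one_mul, dist_eq_norm]
  · have hinner : (inner ℝ e (z - a) : ℝ) - K = (inner ℝ e (z - b) : ℝ) := by
      have hKe : (inner ℝ e (b - a) : ℝ) = K := by
        rw [he, real_inner_smul_left, real_inner_self_eq_norm_sq]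
        field_simp [hKdef]; ring
      have : z - a - (b - a) = z - b := by abel
      rw [← hKe, ← inner_sub_right, this]
    calc gf K (inner ℝ e (z - a) : ℝ) ≤ |(inner ℝ e (z - a) : ℝ) - K| := min_le_right _ _
    _ = |(inner ℝ e (z - b) : ℝ)| := by rw [hinner]
    _ ≤ ‖e‖ * ‖z - b‖ := abs_real_inner_le_norm _ _
    _ = dist z b := by rw [hnorme, one_mul, dist_eq_norm]

lemma piece (hab : a ≠ b) (γ : ℝ → Pt d) (u v : ℝ) (huv : u < v)
    (hC : ContDiffOn ℝ 1 γ (Set.Icc u v)) :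
    IntervalIntegrable
      (fun t => Metric.infDist (γ t) ({a, b} : Set (Pt d)) * ‖deriv γ t‖) volume u v ∧
    Gf ‖b - a‖ (inner ℝ ((‖b - a‖)⁻¹ • (b - a)) (γ v - a) : ℝ)
      - Gf ‖b - a‖ (inner ℝ ((‖b - a‖)⁻¹ • (b - a)) (γ u - a) : ℝ)
      ≤ ∫ t in u..v, Metric.infDist (γ t) ({a, b} : Set (Pt d)) * ‖deriv γ t‖ := by
  have hK : (0:ℝ) < ‖b - a‖ := by
    rw [norm_pos_iff, sub_ne_zero]; exact fun h => hab h.symm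
  set K := ‖b - a‖ with hKdef
  set e : Pt d := K⁻¹ • (b - a) with he
  set P : Set (Pt d) := {a, b} with hP
  set w : ℝ → Pt d := derivWithin γ (Set.Icc u v) with hw
  have hγcont : ContinuousOn γ (Set.Icc u v) := hC.continuousOn
  have huDiff : UniqueDiffOn ℝ (Set.Icc u v) := uniqueDiffOn_Icc huv
  have hwcont : ContinuousOn w (Set.Icc u v) := hC.continuousOn_derivWithin huDiff le_rfl
  have hder : ∀ t ∈ Set.Ioo u v, HasDerivAt γ (w t) t := by
    intro t ht
    have h1 : DifferentiableWithinAt ℝ γ (Set.Icc u v) t :=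
      (hC.differentiableOn one_ne_zero) t (Set.Ioo_subset_Icc_self ht)
    exact h1.hasDerivWithinAt.hasDerivAt (Icc_mem_nhds ht.1 ht.2)
  set s : ℝ → ℝ := fun t => (inner ℝ e (γ t - a) : ℝ) with hs
  have hscont : ContinuousOn s (Set.Icc u v) := by
    exact (continuous_const.inner continuous_id).comp_continuousOn (hγcont.sub continuousOn_const)
  set F : ℝ → ℝ := fun t => Gf K (s t) with hF
  set F' : ℝ → ℝ := fun t => gf K (s t) * (inner ℝ e (w t) : ℝ) with hF'
  have hFcont : ContinuousOn F (Set.Icc u v) := (Gf_cont K).comp_continuousOn hscont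
  have hF'der : ∀ t ∈ Set.Ioo u v, HasDerivAt F (F' t) t := by
    intro t ht
    have h1 : HasDerivAt (fun x => γ x - a) (w t) t := (hder t ht).sub_const a
    have h2 : HasDerivAt s (inner ℝ e (w t) : ℝ) t := by
      have := HasDerivAt.inner ℝ (hasDerivAt_const t e) h1
      simpa using this
    exact (Gf_hasDeriv K (s t)).comp t h2
  have hF'cont : ContinuousOn F' (Set.Icc u v) := by
    apply ContinuousOn.mul ((gf_cont K).comp_continuousOn hscont)
    exact (continuous_const.inner continuous_id).comp_continuousOn hwcont
  have hF'int : IntervalIntegrable F' volume u v :=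
    hF'cont.intervalIntegrable_of_Icc huv.le
  set ψ : ℝ → ℝ := fun t => Metric.infDist (γ t) P * ‖w t‖ with hψ
  have hψcont : ContinuousOn ψ (Set.Icc u v) := by
    apply ContinuousOn.mul
    · exact (Metric.continuous_infDist_pt P).comp_continuousOn hγcont
    · exact continuous_norm.comp_continuousOn hwcont
  have hψint : IntervalIntegrable ψ volume u v := hψcont.intervalIntegrable_of_Icc huv.le
  set φ : ℝ → ℝ := fun t => Metric.infDist (γ t) P * ‖deriv γ t‖ with hφ
  have hφψ : ∀ t ∈ Set.Ioo u v, φ t = ψ t := by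
    intro t ht
    simp only [hφ, hψ]
    rw [(hder t ht).deriv]
  have hφint : IntervalIntegrable φ volume u v := by
    rw [intervalIntegrable_iff_integrableOn_Ioo_of_le huv.le]
    have := (intervalIntegrable_iff_integrableOn_Ioo_of_le huv.le).mp hψint
    exact this.congr_fun (fun t ht => (hφψ t ht).symm) measurableSet_Ioo
  refine ⟨hφint, ?_⟩
  have heq : (∫ t in u..v, F' t) = F v - F u :=
    intervalIntegral.integral_eq_sub_of_hasDerivAt_of_le huv.le hFcont hF'der hF'int
  have hle : (∫ t in u..v, F' t) ≤ ∫ t in u..v, φ t := by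
    apply intervalIntegral.integral_mono_ae_restrict huv.le hF'int hφint
    have hres : volume.restrict (Set.Icc u v) = volume.restrict (Set.Ioo u v) :=
      (Measure.restrict_congr_set Ioo_ae_eq_Icc).symm
    rw [Filter.EventuallyLE, hres]
    rw [ae_restrict_iff' measurableSet_Ioo]
    apply ae_of_all
    intro t ht
    have hptw : F' t ≤ ψ t := by
      calc F' t ≤ gf K (s t) * |(inner ℝ e (w t) : ℝ)| :=
            mul_le_mul_of_nonneg_left (le_abs_self _) (gf_nonneg _ _)
      _ ≤ Metric.infDist (γ t) P * ‖w t‖ := by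
          have h1 : gf K (s t) ≤ Metric.infDist (γ t) P := key_bound a b hab (γ t)
          have hnorme : ‖e‖ = 1 := by
            rw [he, norm_smul, norm_inv, norm_norm]; field_simp; exact div_self hK.ne'
          have h2 : |(inner ℝ e (w t) : ℝ)| ≤ ‖w t‖ := by
            calc |(inner ℝ e (w t) : ℝ)| ≤ ‖e‖ * ‖w t‖ := abs_real_inner_le_norm _ _
            _ = ‖w t‖ := by rw [hnorme, one_mul]
          exact mul_le_mul h1 h2 (abs_nonneg _) Metric.infDist_nonneg
    rw [hφψ t ht]
    exact hptw
  rw [← heq]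
  exact hle

end Lower

lemma lower {d : ℕ} (a b : Pt d) (hab : a ≠ b) (γ : ℝ → Pt d)
    (hγ : PiecewiseC1 γ) (h0 : γ 0 = a) (h1 : γ 1 = b) :
    ‖b - a‖ ^ 2 / 4 ≤ nnLength ({a, b} : Set (Pt d)) γ := by
  obtain ⟨hcont, m, t, hsm, ht0, htl, hC⟩ := hγ
  have hK : (0:ℝ) < ‖b - a‖ := by
    rw [norm_pos_iff, sub_ne_zero]; exact fun h => hab h.symm
  set K := ‖b - a‖ with hKdef
  set e : Pt d := K⁻¹ • (b - a) with he
  set P : Set (Pt d) := {a, b} with hP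
  set φ : ℝ → ℝ := fun t => Metric.infDist (γ t) P * ‖deriv γ t‖ with hφ
  set a' : ℕ → ℝ := fun k => t ⟨min k m, Nat.lt_succ_of_le (min_le_right _ _)⟩ with ha'def
  have ha' : ∀ k, ∀ hk : k ≤ m, a' k = t ⟨k, Nat.lt_succ_of_le hk⟩ := by
    intro k hk
    simp only [ha'def]
    congr 1
    exact Fin.mk.injEq _ _ _ _ ▸ (by simp [min_eq_left hk])
  have hlt : ∀ k, k < m → a' k < a' (k + 1) := by
    intro k hk
    rw [ha' k hk.le, ha' (k+1) hk]
    exact hsm (by simp [Fin.lt_def])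
  have hpieceC : ∀ k, k < m → ContDiffOn ℝ 1 γ (Set.Icc (a' k) (a' (k + 1))) := by
    intro k hk
    rw [ha' k hk.le, ha' (k+1) hk]
    exact hC ⟨k, hk⟩
  have hpb := fun k (hk : k < m) =>
    piece a b hab γ (a' k) (a' (k+1)) (hlt k hk) (hpieceC k hk)
  have hsum := intervalIntegral.sum_integral_adjacent_intervals
    (f := φ) (μ := volume) (a := a') (n := m) (fun k hk => (hpb k hk).1)
  have ha'0 : a' 0 = 0 := by
    rw [ha' 0 (Nat.zero_le m), ← ht0]
    exact congrArg t (Fin.ext (by simp))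
  have ha'm : a' m = 1 := by
    rw [ha' m le_rfl]
    rw [← htl]
    rfl
  set g : ℕ → ℝ := fun k => Gf K ((inner ℝ e (γ (a' k) - a) : ℝ)) with hg
  have htel : (∑ k ∈ Finset.range m, (g (k+1) - g k)) = g m - g 0 :=
    Finset.sum_range_sub g m
  have hstep : ∀ k ∈ Finset.range m, g (k+1) - g k ≤ ∫ x in a' k..a' (k+1), φ x := by
    intro k hk
    exact (hpb k (Finset.mem_range.mp hk)).2
  have hmain : g m - g 0 ≤ ∫ x in (a' 0)..(a' m), φ x := by
    rw [← htel, ← hsum]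
    exact Finset.sum_le_sum hstep
  have hKe : (inner ℝ e (b - a) : ℝ) = K := by
    rw [he, real_inner_smul_left, real_inner_self_eq_norm_sq]
    field_simp [hKdef]; ring
  have hg0 : g 0 = Gf K 0 := by
    rw [hg]
    simp only [ha'0, h0, sub_self, inner_zero_right]
  have hgm : g m = Gf K K := by
    rw [hg]
    simp only [ha'm, h1, hKe]
  have hfinal : K ^ 2 / 4 ≤ ∫ x in (0:ℝ)..1, φ x := by
    have := hmain
    rw [hg0, hgm, Gf_sub K hK.le, ha'0, ha'm] at this
    exact this
  exact hfinal

lemma line_piecewise {d : ℕ} (a b : Pt d) : PiecewiseC1 (fun u : ℝ => a + u • (b - a)) := by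
  constructor
  · exact (continuous_const.add (continuous_id.smul continuous_const)).continuousOn
  · refine ⟨1, ![0, 1], ?_, rfl, rfl, ?_⟩
    · intro i j hij
      fin_cases i <;> fin_cases j <;> simp_all <;> norm_num
    · intro i
      exact (contDiff_const.add (contDiff_id.smul contDiff_const)).contDiffOn

lemma line_deriv {d : ℕ} (a b : Pt d) (u : ℝ) :
    deriv (fun u : ℝ => a + u • (b - a)) u = b - a := by
  have h1 : HasDerivAt (fun u : ℝ => u • (b - a)) ((1:ℝ) • (b - a)) u :=
    (hasDerivAt_id u).smul_const (b - a)
  have h : HasDerivAt (fun u : ℝ => a + u • (b - a)) (b - a) u := by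
    simpa [one_smul] using h1.const_add a
  exact h.deriv

lemma min_cont : Continuous (fun u : ℝ => min u (1 - u)) :=
  continuous_id.min (continuous_const.sub continuous_id)

lemma line_length {d : ℕ} (a b : Pt d) (hab : a ≠ b) :
    nnLength ({a, b} : Set (Pt d)) (fun u : ℝ => a + u • (b - a)) = ‖b - a‖ ^ 2 / 4 := by
  set K := ‖b - a‖ with hKdef
  have hcong : Set.EqOn
      (fun u : ℝ => Metric.infDist ((fun u : ℝ => a + u • (b - a)) u) ({a, b} : Set (Pt d)) *
        ‖deriv (fun u : ℝ => a + u • (b - a)) u‖)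
      (fun u : ℝ => min u (1 - u) * K ^ 2) (Set.uIcc (0:ℝ) 1) := by
    intro u hu
    rw [Set.uIcc_of_le (by norm_num)] at hu
    obtain ⟨h0u, hu1⟩ := hu
    simp only
    rw [line_deriv, infDist_pair]
    have hda : dist (a + u • (b - a)) a = u * K := by
      rw [dist_eq_norm]
      have : a + u • (b - a) - a = u • (b - a) := by abel
      rw [this, norm_smul, Real.norm_eq_abs, abs_of_nonneg h0u]
    have hdb : dist (a + u • (b - a)) b = (1 - u) * K := by
      rw [dist_eq_norm]
      have : a + u • (b - a) - b = -((1 - u) • (b - a)) := by module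
      rw [this, norm_neg, norm_smul, Real.norm_eq_abs,
        abs_of_nonneg (by linarith : (0:ℝ) ≤ 1 - u)]
    rw [hda, hdb]
    rcases le_total u (1 - u) with h | h
    · rw [min_eq_left (by nlinarith [norm_nonneg (b - a)] : u * K ≤ (1 - u) * K),
        min_eq_left h]
      ring
    · rw [min_eq_right (by nlinarith [norm_nonneg (b - a)] : (1 - u) * K ≤ u * K),
        min_eq_right h]
      ring
  unfold nnLength
  rw [intervalIntegral.integral_congr hcong]
  have hint : ∀ (x y : ℝ), IntervalIntegrable (fun u : ℝ => min u (1 - u) * K ^ 2) volume x y :=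
    fun x y => (min_cont.mul continuous_const).intervalIntegrable x y
  have hsplit : (∫ u in (0:ℝ)..1, min u (1 - u) * K ^ 2)
      = (∫ u in (0:ℝ)..(1/2), min u (1 - u) * K ^ 2)
        + ∫ u in (1/2:ℝ)..1, min u (1 - u) * K ^ 2 :=
    (intervalIntegral.integral_add_adjacent_intervals (hint 0 (1/2)) (hint (1/2) 1)).symm
  have h1 : (∫ u in (0:ℝ)..(1/2), min u (1 - u) * K ^ 2) = K ^ 2 / 8 := by
    have : (∫ u in (0:ℝ)..(1/2), min u (1 - u) * K ^ 2) = ∫ u in (0:ℝ)..(1/2), u * K ^ 2 := by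
      apply intervalIntegral.integral_congr
      intro u hu
      rw [Set.uIcc_of_le (by norm_num)] at hu
      obtain ⟨h0, h1⟩ := hu
      simp only
      rw [min_eq_left (by linarith)]
    rw [this, intervalIntegral.integral_mul_const, integral_id]
    ring
  have h2 : (∫ u in (1/2:ℝ)..1, min u (1 - u) * K ^ 2) = K ^ 2 / 8 := by
    have : (∫ u in (1/2:ℝ)..1, min u (1 - u) * K ^ 2) = ∫ u in (1/2:ℝ)..1, (1 - u) * K ^ 2 := by
      apply intervalIntegral.integral_congr
      intro u hu
      rw [Set.uIcc_of_le (by norm_num)] at hu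
      obtain ⟨h0, h1⟩ := hu
      simp only
      rw [min_eq_right (by linarith)]
    rw [this, intervalIntegral.integral_mul_const]
    have : (∫ u in (1/2:ℝ)..1, (1 - u)) = (∫ u in (1/2:ℝ)..1, (1:ℝ)) - ∫ u in (1/2:ℝ)..1, u :=
      intervalIntegral.integral_sub intervalIntegrable_const intervalIntegral.intervalIntegrable_id
    rw [this, integral_id, intervalIntegral.integral_const, smul_eq_mul]
    ring
  rw [hsplit, h1, h2]
  ring

/-- If `P = {a, b}` consists of exactly two points of `ℝ^d`, then the
nearest-neighbor geodesic distance between them equals the squared Euclidean distance. -/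
theorem nnGeo_pair (d : ℕ) (a b : Pt d) (hab : a ≠ b) :
    nnGeo ({a, b} : Set (Pt d)) a b = ‖a - b‖ ^ 2 := by
  set S := {l : ℝ | ∃ γ : ℝ → Pt d, PiecewiseC1 γ ∧ γ 0 = a ∧ γ 1 = b ∧
    l = nnLength ({a, b} : Set (Pt d)) γ} with hS
  have hmem : (‖b - a‖ ^ 2 / 4) ∈ S := by
    refine ⟨fun u : ℝ => a + u • (b - a), line_piecewise a b, by simp, ?_, (line_length a b hab).symm⟩
    simp
  have hlb : ∀ l ∈ S, ‖b - a‖ ^ 2 / 4 ≤ l := by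
    rintro l ⟨γ, hγ, h0, h1, rfl⟩
    exact lower a b hab γ hγ h0 h1
  have hinf : sInf S = ‖b - a‖ ^ 2 / 4 :=
    le_antisymm (csInf_le ⟨_, hlb⟩ hmem) (le_csInf ⟨_, hmem⟩ hlb)
  unfold nnGeo
  rw [← hS, hinf, norm_sub_rev]
  ring
end
end

section
/- With the lifting map m defined from the ordering of P by edge-squared distance to the source s, for all indices i, j one has ‖m(p_j) − m(p_i)‖ = √(|d₂(s,p_j) − d₂(s,p_i)|). -/
open scoped BigOperators
open MeasureTheory

noncomputable section

/- Setup comment: Setup for the lifting map: `P = {p 0, …, p n} ⊆ ℝ^d` with source `s = p 0`, enumerated in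
nondecreasing order of edge-squared distance to the source, and `m` is defined recursively by
`m (p 0) = 0` and `m pᵢ = m pᵢ₋₁ + √(d₂(s,pᵢ) - d₂(s,pᵢ₋₁)) • eᵢ`. -/
/-- For all indices `i, j`,
`‖m(p_j) − m(p_i)‖ = √|d₂(s,p_j) − d₂(s,p_i)|`. -/
theorem liftMap_dist (d n : ℕ) (P : Set (Pt d)) (p : Fin (n + 1) → Pt d)
    (hP : P = Set.range p)
    (hmono : ∀ i j : Fin (n + 1), i ≤ j → edgeSq P (p 0) (p i) ≤ edgeSq P (p 0) (p j))
    (m : Fin (n + 1) → EuclideanSpace ℝ (Fin (n + 1)))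
    (hm0 : m 0 = 0)
    (hrec : ∀ i : Fin n, m i.succ = m i.castSucc +
      Real.sqrt (edgeSq P (p 0) (p i.succ) - edgeSq P (p 0) (p i.castSucc)) •
        EuclideanSpace.single i.succ (1 : ℝ)) :
    ∀ i j : Fin (n + 1),
      ‖m j - m i‖ = Real.sqrt |edgeSq P (p 0) (p j) - edgeSq P (p 0) (p i)| := by
  set e : Fin (n + 1) → ℝ := fun k => edgeSq P (p 0) (p k) with he
  have hcoord : ∀ l c : Fin (n + 1), l < c → m l c = 0 := by
    intro l
    induction l using Fin.induction with
    | zero => intro c _; rw [hm0]; rfl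
    | succ k ih =>
      intro c hc
      rw [hrec k]
      have h1 : m k.castSucc c = 0 := ih c (lt_trans (Fin.castSucc_lt_succ : k.castSucc < k.succ) hc)
      have h2 : c ≠ k.succ := ne_of_gt hc
      simp [PiLp.add_apply, PiLp.smul_apply, EuclideanSpace.single_apply, h1, h2]
  have hsq : ∀ j i : Fin (n + 1), i ≤ j → ‖m j - m i‖ ^ 2 = e j - e i := by
    intro j
    induction j using Fin.induction with
    | zero =>
      intro i hi
      have : i = 0 := le_antisymm hi (Fin.zero_le i)
      subst this; simp
    | succ k ih =>
      intro i hi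
      rcases eq_or_lt_of_le hi with h | h
      · subst h; simp
      · have hi' : i ≤ k.castSucc := Fin.le_castSucc_iff.mpr h
        have hΔ : 0 ≤ e k.succ - e k.castSucc :=
          sub_nonneg.mpr (hmono _ _ (le_of_lt (Fin.castSucc_lt_succ : k.castSucc < k.succ)))
        set c := Real.sqrt (e k.succ - e k.castSucc) with hc
        have hdecomp : m k.succ - m i =
            (m k.castSucc - m i) + c • EuclideanSpace.single k.succ (1 : ℝ) := by
          rw [hrec k]; abel
        have hz : (m k.castSucc - m i) k.succ = 0 := by
          have a1 := hcoord k.castSucc k.succ (Fin.castSucc_lt_succ : k.castSucc < k.succ)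
          have a2 := hcoord i k.succ (lt_of_le_of_lt hi' (Fin.castSucc_lt_succ : k.castSucc < k.succ))
          simp [PiLp.sub_apply, a1, a2]
        have hinner : inner (𝕜 := ℝ) (m k.castSucc - m i)
            (c • EuclideanSpace.single k.succ (1 : ℝ)) = 0 := by
          rw [real_inner_smul_right]
          have : inner (𝕜 := ℝ) (m k.castSucc - m i)
              (EuclideanSpace.single k.succ (1 : ℝ)) = (m k.castSucc - m i) k.succ := by
            simp [EuclideanSpace.inner_single_right]
          rw [this, hz, mul_zero]
        have hnorm2 : ‖c • EuclideanSpace.single k.succ (1 : ℝ)‖ ^ 2 = e k.succ - e k.castSucc := by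
          rw [norm_smul, EuclideanSpace.norm_single]
          simp [abs_of_nonneg (Real.sqrt_nonneg _), hc, Real.sq_sqrt hΔ]
        rw [hdecomp, norm_add_sq_real, hinner, hnorm2, ih i hi']
        ring
  intro i j
  rcases le_total i j with h | h
  · rw [abs_of_nonneg (sub_nonneg.mpr (hmono i j h)), ← hsq j i h,
      Real.sqrt_sq (norm_nonneg _)]
  · rw [norm_sub_rev, abs_sub_comm, abs_of_nonneg (sub_nonneg.mpr (hmono j i h)),
      ← hsq i j h, Real.sqrt_sq (norm_nonneg _)]
end
end

section
/- With the lifting map m defined from the ordering of P by edge-squared distance to the source s, for all indices i, j one has ‖m(s) − m(p_j)‖² ≤ ‖m(p_i)‖² + ‖m(p_i) − m(p_j)‖². -/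
open scoped BigOperators
open MeasureTheory RealInnerProductSpace

noncomputable section

/- Setup comment: Setup for the lifting map: `P = {p 0, …, p n} ⊆ ℝ^d` with source `s = p 0`, enumerated in
nondecreasing order of edge-squared distance to the source, and `m` is defined recursively by
`m (p 0) = 0` and `m pᵢ = m pᵢ₋₁ + √(d₂(s,pᵢ) - d₂(s,pᵢ₋₁)) • eᵢ`. -/
/-- For all indices `i, j`,
`‖m(s) − m(p_j)‖² ≤ ‖m(p_i)‖² + ‖m(p_i) − m(p_j)‖²`. -/
theorem liftMap_sq_ineq (d n : ℕ) (P : Set (Pt d)) (p : Fin (n + 1) → Pt d)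
    (hP : P = Set.range p)
    (hmono : ∀ i j : Fin (n + 1), i ≤ j → edgeSq P (p 0) (p i) ≤ edgeSq P (p 0) (p j))
    (m : Fin (n + 1) → EuclideanSpace ℝ (Fin (n + 1)))
    (hm0 : m 0 = 0)
    (hrec : ∀ i : Fin n, m i.succ = m i.castSucc +
      Real.sqrt (edgeSq P (p 0) (p i.succ) - edgeSq P (p 0) (p i.castSucc)) •
        EuclideanSpace.single i.succ (1 : ℝ)) :
    ∀ i j : Fin (n + 1),
      ‖m 0 - m j‖ ^ 2 ≤ ‖m i‖ ^ 2 + ‖m i - m j‖ ^ 2 := by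
  -- coordinates above i vanish
  have hzero : ∀ i k : Fin (n + 1), i < k → m i k = 0 := by
    intro i
    induction i using Fin.induction with
    | zero => intro k _; simp [hm0]
    | succ i ih =>
      intro k hk
      have h1 : i.castSucc < k := lt_trans (Fin.castSucc_lt_succ (i := i)) hk
      have h2 : k ≠ i.succ := ne_of_gt hk
      rw [hrec i]
      rw [PiLp.add_apply, PiLp.smul_apply, ih k h1, EuclideanSpace.single_apply, if_neg h2]
      simp
  have hinner : ∀ j i : Fin (n + 1), i ≤ j → (inner ℝ (m i) (m j) : ℝ) = ‖m i‖ ^ 2 := by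
    intro j
    induction j using Fin.induction with
    | zero =>
      intro i hi
      have : i = 0 := le_antisymm hi (Fin.zero_le i)
      subst this
      rw [real_inner_self_eq_norm_sq]
    | succ j ih =>
      intro i hi
      rcases lt_or_eq_of_le hi with h | h
      · have hle : i ≤ j.castSucc := by
          have := Fin.lt_def.mp h
          rw [Fin.le_def]
          simp [Fin.val_succ] at this ⊢
          omega
        rw [hrec j, inner_add_right, inner_smul_right,
          EuclideanSpace.inner_single_right]
        have hz : m i j.succ = 0 := hzero i j.succ (lt_of_le_of_lt hle (Fin.castSucc_lt_succ (i := j)))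
        simp [hz, ih i hle]
      · subst h
        rw [real_inner_self_eq_norm_sq]
  have hmonon : ∀ j i : Fin (n + 1), i ≤ j → ‖m i‖ ^ 2 ≤ ‖m j‖ ^ 2 := by
    intro j
    induction j using Fin.induction with
    | zero =>
      intro i hi
      have : i = 0 := le_antisymm hi (Fin.zero_le i)
      simp [this]
    | succ j ih =>
      intro i hi
      rcases lt_or_eq_of_le hi with h | h
      · have hle : i ≤ j.castSucc := by
          have := Fin.lt_def.mp h
          rw [Fin.le_def]
          simp [Fin.val_succ] at this ⊢
          omega
        refine le_trans (ih i hle) ?_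
        rw [hrec j]
        rw [norm_add_sq_real]
        have hz : (inner ℝ (m j.castSucc) ((Real.sqrt (edgeSq P (p 0) (p j.succ) - edgeSq P (p 0) (p j.castSucc))) • EuclideanSpace.single j.succ (1:ℝ)) : ℝ) = 0 := by
          rw [inner_smul_right, EuclideanSpace.inner_single_right,
            hzero j.castSucc j.succ (Fin.castSucc_lt_succ (i := j))]
          simp
        rw [hz]
        nlinarith [sq_nonneg ‖(Real.sqrt (edgeSq P (p 0) (p j.succ) - edgeSq P (p 0) (p j.castSucc)) • EuclideanSpace.single j.succ (1:ℝ) : EuclideanSpace ℝ (Fin (n+1)))‖]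
      · subst h; exact le_refl _
  intro i j
  rw [hm0, zero_sub, norm_neg, norm_sub_sq_real]
  rcases le_total i j with h | h
  · rw [hinner j i h]
    nlinarith
  · rw [real_inner_comm, hinner i j h]
    nlinarith [hmonon i j h]
end
end

section
/- The lifting map m defined from the ordering of P by edge-squared distance to the source s is 1-Lipschitz as a map between Euclidean metrics: for all a, b ∈ P, ‖m(a) − m(b)‖ ≤ ‖a − b‖. -/
open scoped BigOperators
open MeasureTheory

noncomputable section

def chainSet {d : ℕ} (P : Set (Pt d)) (a b : Pt d) : Set ℝ :=
  {c : ℝ | ∃ (k : ℕ) (p : Fin (k + 1) → Pt d), p 0 = a ∧ p (Fin.last k) = b ∧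
    (∀ i, p i ∈ P) ∧ c = ∑ i : Fin k, ‖p i.succ - p i.castSucc‖ ^ 2}

lemma edgeSq_eq' {d : ℕ} (P : Set (Pt d)) (a b : Pt d) :
    edgeSq P a b = sInf (chainSet P a b) := rfl

lemma chainSet_bddBelow {d : ℕ} (P : Set (Pt d)) (a b : Pt d) :
    BddBelow (chainSet P a b) := by
  refine ⟨0, fun c hc => ?_⟩
  obtain ⟨k, q, -, -, -, rfl⟩ := hc
  positivity

lemma chainSet_nonempty {d : ℕ} (P : Set (Pt d)) (a b : Pt d)
    (ha : a ∈ P) (hb : b ∈ P) : (chainSet P a b).Nonempty := by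
  refine ⟨‖b - a‖ ^ 2, 1, ![a, b], rfl, rfl, ?_, ?_⟩
  · intro i
    fin_cases i <;> simpa
  · simp

lemma edgeSq_step {d : ℕ} (P : Set (Pt d)) (a b c : Pt d)
    (ha : a ∈ P) (hb : b ∈ P) (hc : c ∈ P) :
    edgeSq P a c ≤ edgeSq P a b + ‖c - b‖ ^ 2 := by
  rw [edgeSq_eq', edgeSq_eq']
  have h1 : sInf (chainSet P a c) - ‖c - b‖ ^ 2 ≤ sInf (chainSet P a b) := by
    apply le_csInf (chainSet_nonempty P a b ha hb)
    rintro S ⟨k, q, hq0, hqlast, hqP, rfl⟩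
    have hmem : (∑ i : Fin k, ‖q i.succ - q i.castSucc‖ ^ 2) + ‖c - b‖ ^ 2 ∈ chainSet P a c := by
      refine ⟨k + 1, Fin.snoc q c, ?_, ?_, ?_, ?_⟩
      · rw [show (0 : Fin (k+2)) = (0 : Fin (k+1)).castSucc from rfl, Fin.snoc_castSucc, hq0]
      · simp [Fin.snoc_last]
      · intro i
        refine Fin.lastCases ?_ ?_ i
        · simpa using hc
        · intro j; rw [Fin.snoc_castSucc]; exact hqP j
      · rw [Fin.sum_univ_castSucc]
        congr 1
        · apply Finset.sum_congr rfl
          intro i _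
          rw [Fin.succ_castSucc, Fin.snoc_castSucc, Fin.snoc_castSucc]
        · rw [Fin.succ_last, Fin.snoc_last, Fin.snoc_castSucc, hqlast]
    have := csInf_le (chainSet_bddBelow P a c) hmem
    linarith
  linarith


/- Setup comment: Setup for the lifting map: `P = {p 0, …, p n} ⊆ ℝ^d` with source `s = p 0`, enumerated in
nondecreasing order of edge-squared distance to the source, and `m` is defined recursively by
`m (p 0) = 0` and `m pᵢ = m pᵢ₋₁ + √(d₂(s,pᵢ) - d₂(s,pᵢ₋₁)) • eᵢ`. -/
/-- The lifting map `m` is 1-Lipschitz between Euclidean metrics: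
`‖m(a) − m(b)‖ ≤ ‖a − b‖` for all `a, b ∈ P`. -/
theorem liftMap_lipschitz (d n : ℕ) (P : Set (Pt d)) (p : Fin (n + 1) → Pt d)
    (hP : P = Set.range p)
    (hmono : ∀ i j : Fin (n + 1), i ≤ j → edgeSq P (p 0) (p i) ≤ edgeSq P (p 0) (p j))
    (m : Fin (n + 1) → EuclideanSpace ℝ (Fin (n + 1)))
    (hm0 : m 0 = 0)
    (hrec : ∀ i : Fin n, m i.succ = m i.castSucc +
      Real.sqrt (edgeSq P (p 0) (p i.succ) - edgeSq P (p 0) (p i.castSucc)) •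
        EuclideanSpace.single i.succ (1 : ℝ)) :
    ∀ i j : Fin (n + 1), ‖m i - m j‖ ≤ ‖p i - p j‖ := by
  have hmem : ∀ i : Fin (n + 1), p i ∈ P := by
    intro i; rw [hP]; exact Set.mem_range_self i
  -- coordinates above index k vanish
  have hcoord : ∀ k l : Fin (n + 1), k < l → m k l = 0 := by
    intro k
    induction k using Fin.induction with
    | zero => intro l _; simp [hm0]
    | succ i ih =>
      intro l hl
      rw [hrec i]
      have h1 : i.castSucc < l := lt_trans (Fin.castSucc_lt_succ : i.castSucc < i.succ) hl
      have h2 : (EuclideanSpace.single i.succ (1:ℝ)) l = 0 := by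
        rw [EuclideanSpace.single_apply, if_neg (ne_of_gt hl)]
      simp only [PiLp.add_apply, PiLp.smul_apply, ih l h1, h2, smul_eq_mul, mul_zero, add_zero]
  -- squared norm of differences
  have hnorm : ∀ j : Fin (n + 1), ∀ i, i ≤ j →
      ‖m j - m i‖ ^ 2 = edgeSq P (p 0) (p j) - edgeSq P (p 0) (p i) := by
    intro j
    induction j using Fin.induction with
    | zero =>
      intro i hi
      have : i = 0 := le_antisymm hi (Fin.zero_le i)
      subst this; simp
    | succ k ih =>
      intro i hi
      rcases eq_or_lt_of_le hi with rfl | hlt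
      · simp
      · have hi' : i ≤ k.castSucc := Fin.le_castSucc_iff.mpr hlt
        have hx : m k.succ - m i = (m k.castSucc - m i) +
            (Real.sqrt (edgeSq P (p 0) (p k.succ) - edgeSq P (p 0) (p k.castSucc))) •
              EuclideanSpace.single k.succ (1:ℝ) := by
          rw [hrec k]; abel
        rw [hx, norm_add_sq_real]
        have h1 : (m k.castSucc - m i) k.succ = 0 := by
          have := hcoord k.castSucc k.succ (Fin.castSucc_lt_succ : k.castSucc < k.succ)
          have := hcoord i k.succ (lt_of_le_of_lt hi' (Fin.castSucc_lt_succ : k.castSucc < k.succ))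
          simp_all [PiLp.sub_apply]
        have horth : (inner ℝ (m k.castSucc - m i)
            ((Real.sqrt (edgeSq P (p 0) (p k.succ) - edgeSq P (p 0) (p k.castSucc))) •
              EuclideanSpace.single k.succ (1:ℝ)) : ℝ) = 0 := by
          rw [real_inner_smul_right, EuclideanSpace.inner_single_right]
          simp [h1]
        have hdnn : 0 ≤ edgeSq P (p 0) (p k.succ) - edgeSq P (p 0) (p k.castSucc) :=
          sub_nonneg.mpr (hmono _ _ (Fin.castSucc_lt_succ : k.castSucc < k.succ).le)
        have hsq : ‖(Real.sqrt (edgeSq P (p 0) (p k.succ) - edgeSq P (p 0) (p k.castSucc))) •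
            EuclideanSpace.single k.succ (1:ℝ)‖ ^ 2
            = edgeSq P (p 0) (p k.succ) - edgeSq P (p 0) (p k.castSucc) := by
          rw [norm_smul, EuclideanSpace.norm_single, mul_pow, Real.norm_eq_abs, sq_abs,
            norm_one, one_pow, mul_one, Real.sq_sqrt hdnn]
        rw [horth, hsq, ih i hi']
        ring
  intro i j
  -- reduce to the ordered case
  wlog hij : j ≤ i generalizing i j
  · rw [norm_sub_rev, norm_sub_rev (p i)]
    exact this j i (le_of_not_ge hij)
  have h1 := hnorm i j hij
  have h2 : edgeSq P (p 0) (p i) ≤ edgeSq P (p 0) (p j) + ‖p i - p j‖ ^ 2 :=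
    edgeSq_step P (p 0) (p j) (p i) (hmem 0) (hmem j) (hmem i)
  have h3 : ‖m i - m j‖ ^ 2 ≤ ‖p i - p j‖ ^ 2 := by rw [h1]; linarith
  have := Real.sqrt_le_sqrt h3
  rwa [Real.sqrt_sq (norm_nonneg _), Real.sqrt_sq (norm_nonneg _)] at this
end
end

section
/- Let P ⊂ ℝ^d be finite, let x ∈ ℝ^d, let p ∈ P, and let γ be any piecewise-C¹ path from x to p. Then ℓ(γ) ≥ (1/2)·r_P(x)², where ℓ is the nearest-neighbor path length with respect to P. -/
open scoped BigOperators
open MeasureTheory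

noncomputable section

/-- The function `y ↦ (max y 0)²` is differentiable with derivative `2 max y 0`. -/
lemma hasDerivAt_sq_max (c : ℝ) :
    HasDerivAt (fun y : ℝ => max y 0 ^ 2) (2 * max c 0) c := by
  rcases lt_trichotomy c 0 with hc | hc | hc
  · rw [max_eq_right hc.le, mul_zero]
    have h : (fun y : ℝ => max y 0 ^ 2) =ᶠ[nhds c] fun _ => (0 : ℝ) := by
      filter_upwards [Iio_mem_nhds hc] with y hy
      simp [max_eq_right hy.out.le]
    exact (hasDerivAt_const c (0 : ℝ)).congr_of_eventuallyEq h
  · subst hc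
    rw [max_self, mul_zero]
    rw [hasDerivAt_iff_isLittleO]
    rw [Asymptotics.isLittleO_iff]
    intro ε hε
    filter_upwards [Metric.closedBall_mem_nhds (0:ℝ) hε] with y hy
    simp only [Metric.mem_closedBall, Real.dist_eq, sub_zero] at hy
    have hb : ‖max y 0 ^ 2 - max (0:ℝ) 0 ^ 2 - (y - 0) • (0:ℝ)‖ ≤ |y| * |y| := by
      simp only [max_self, ne_eq, OfNat.ofNat_ne_zero, not_false_eq_true, zero_pow, sub_zero,
        smul_zero, Real.norm_eq_abs]
      have h1 : |max y 0| ≤ |y| := by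
        rcases le_or_gt y 0 with h | h
        · simp [max_eq_right h]
        · simp [max_eq_left h.le]
      calc |max y 0 ^ 2| = |max y 0| * |max y 0| := by rw [← abs_mul, sq]
        _ ≤ |y| * |y| := mul_le_mul h1 h1 (abs_nonneg _) (abs_nonneg _)
    refine hb.trans ?_
    rw [sub_zero, Real.norm_eq_abs]
    exact mul_le_mul_of_nonneg_right hy (abs_nonneg _)
  · rw [max_eq_left hc.le]
    have h : (fun y : ℝ => max y 0 ^ 2) =ᶠ[nhds c] fun y => y ^ 2 := by
      filter_upwards [Ioi_mem_nhds hc] with y hy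
      simp [max_eq_left hy.out.le]
    have h2 : HasDerivAt (fun y : ℝ => y ^ 2) (2 * c) c := by
      simpa using (hasDerivAt_pow 2 c)
    exact h2.congr_of_eventuallyEq h

/-- Basic facts about a `C¹` piece of a path: differentiability on the interior, continuity
of the norm of the derivative, a bound on the derivative, interval integrability of the norm of
the derivative, and the fundamental estimate `‖γ s - γ a‖ ≤ ∫ₐˢ ‖γ'‖`. -/
lemma piece_facts {d : ℕ} {γ : ℝ → Pt d} {a b : ℝ} (hab : a < b)
    (hC : ContDiffOn ℝ 1 γ (Set.Icc a b)) :
    (∀ s ∈ Set.Ioo a b, HasDerivAt γ (deriv γ s) s) ∧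
    ContinuousOn (fun s => ‖deriv γ s‖) (Set.Ioo a b) ∧
    (∃ C, ∀ s ∈ Set.Ioo a b, ‖deriv γ s‖ ≤ C) ∧
    IntervalIntegrable (fun s => ‖deriv γ s‖) volume a b ∧
    (∀ s ∈ Set.Icc a b, ‖γ s - γ a‖ ≤ ∫ u in a..s, ‖deriv γ u‖) := by
  have hd : ∀ s ∈ Set.Ioo a b, HasDerivAt γ (deriv γ s) s := by
    intro s hs
    have hmem : Set.Icc a b ∈ nhds s := Icc_mem_nhds hs.1 hs.2
    exact ((hC.differentiableOn one_ne_zero s (Set.Ioo_subset_Icc_self hs)).differentiableAt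
      hmem).hasDerivAt
  have hdw : ContinuousOn (derivWithin γ (Set.Icc a b)) (Set.Icc a b) :=
    hC.continuousOn_derivWithin (uniqueDiffOn_Icc hab) le_rfl
  have heq : ∀ s ∈ Set.Ioo a b, derivWithin γ (Set.Icc a b) s = deriv γ s := fun s hs =>
    derivWithin_of_mem_nhds (Icc_mem_nhds hs.1 hs.2)
  have hcd : ContinuousOn (deriv γ) (Set.Ioo a b) :=
    ((hdw.mono Set.Ioo_subset_Icc_self).congr fun s hs => (heq s hs).symm)
  obtain ⟨C, hCb⟩ := isCompact_Icc.exists_bound_of_continuousOn hdw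
  have hbound : ∀ s ∈ Set.Ioo a b, ‖deriv γ s‖ ≤ C := fun s hs => by
    rw [← heq s hs]; exact hCb s (Set.Ioo_subset_Icc_self hs)
  have hmeas : AEStronglyMeasurable (deriv γ) (volume.restrict (Set.Ioo a b)) :=
    (measurable_deriv γ).aestronglyMeasurable.restrict
  have hintD : IntervalIntegrable (deriv γ) volume a b := by
    rw [intervalIntegrable_iff_integrableOn_Ioo_of_le hab.le]
    refine Integrable.mono' (g := fun _ => C) ?_ hmeas ?_
    · exact integrableOn_const measure_Ioo_lt_top.ne
    · exact (ae_restrict_iff' measurableSet_Ioo).2 (ae_of_all _ hbound)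
  have hintN : IntervalIntegrable (fun s => ‖deriv γ s‖) volume a b := hintD.norm
  refine ⟨hd, hcd.norm, ⟨C, hbound⟩, hintN, ?_⟩
  intro s hs
  have hsub : Set.uIcc a s ⊆ Set.uIcc a b := by
    rw [Set.uIcc_of_le hs.1, Set.uIcc_of_le hab.le]
    exact Set.Icc_subset_Icc le_rfl hs.2
  have hftc : ∫ u in a..s, deriv γ u = γ s - γ a :=
    intervalIntegral.integral_eq_sub_of_hasDeriv_right_of_le hs.1
      (hC.continuousOn.mono (Set.Icc_subset_Icc le_rfl hs.2))
      (fun u hu => (hd u ⟨hu.1, hu.2.trans_le hs.2⟩).hasDerivWithinAt)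
      (hintD.mono_set hsub)
  calc ‖γ s - γ a‖ = ‖∫ u in a..s, deriv γ u‖ := by rw [hftc]
    _ ≤ ∫ u in a..s, ‖deriv γ u‖ := intervalIntegral.norm_integral_le_integral_norm hs.1

/-- For a finite `P ⊆ ℝ^d`, `x ∈ ℝ^d`, `p ∈ P`, and any piecewise-C¹ path `γ`
from `x` to `p`, the nearest-neighbor length satisfies `ℓ(γ) ≥ (1/2) ⬝ r_P(x)²`. -/
theorem nnLength_ge_half_infDist_sq (d : ℕ) (P : Set (Pt d)) (hP : P.Finite)
    (x q : Pt d) (hq : q ∈ P) (γ : ℝ → Pt d) (hγ : PiecewiseC1 γ)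
    (h0 : γ 0 = x) (h1 : γ 1 = q) :
    nnLength P γ ≥ (1 / 2) * Metric.infDist x P ^ 2 := by
  obtain ⟨hγc, m, t, hmono, ht0, htm, hC1⟩ := hγ
  set r0 : ℝ := Metric.infDist x P with hr0
  have hr0nn : 0 ≤ r0 := Metric.infDist_nonneg
  set h : ℝ → ℝ := fun s => Metric.infDist (γ s) P with hhdef
  set N : ℝ → ℝ := fun s => ‖deriv γ s‖ with hNdef
  -- reindex the partition by ℕ
  set u : ℕ → ℝ := fun k => t ⟨min k m, Nat.lt_succ_of_le (min_le_right k m)⟩ with hudef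
  have hu_eq : ∀ k (hk : k ≤ m), u k = t ⟨k, Nat.lt_succ_of_le hk⟩ := fun k hk =>
    congrArg t (Fin.ext (min_eq_left hk))
  have hu0 : u 0 = 0 := by
    have : u 0 = t 0 := congrArg t (Fin.ext (Nat.zero_min m))
    rw [this, ht0]
  have hum : u m = 1 := by
    have : u m = t (Fin.last m) := congrArg t (Fin.ext (min_self m))
    rw [this, htm]
  have hlt : ∀ k, k < m → u k < u (k + 1) := by
    intro k hk
    rw [hu_eq k hk.le, hu_eq (k + 1) hk]
    exact hmono (Fin.mk_lt_mk.2 (Nat.lt_succ_self k))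
  have hu01 : ∀ k, u k ∈ Set.Icc (0 : ℝ) 1 := by
    intro k
    constructor
    · rw [← ht0]; exact hmono.monotone (Fin.zero_le _)
    · rw [← htm]; exact hmono.monotone (Fin.le_last _)
  have hpsub : ∀ k, Set.Icc (u k) (u (k + 1)) ⊆ Set.Icc (0 : ℝ) 1 := fun k =>
    Set.Icc_subset_Icc (hu01 k).1 (hu01 (k + 1)).2
  have hC1' : ∀ k (hk : k < m), ContDiffOn ℝ 1 γ (Set.Icc (u k) (u (k + 1))) := by
    intro k hk
    rw [hu_eq k hk.le, hu_eq (k + 1) hk]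
    exact hC1 ⟨k, hk⟩
  have hPF := fun k (hk : k < m) => piece_facts (hlt k hk) (hC1' k hk)
  have intN : ∀ k, k < m → IntervalIntegrable N volume (u k) (u (k + 1)) := fun k hk =>
    (hPF k hk).2.2.2.1
  have intN0 : ∀ k, k ≤ m → IntervalIntegrable N volume 0 (u k) := by
    intro k
    induction k with
    | zero => intro _; rw [hu0]
    | succ k ih => intro hk; exact (ih (Nat.le_of_succ_le hk)).trans (intN k hk)
  have intN01 : IntervalIntegrable N volume 0 1 := hum ▸ intN0 m le_rfl
  set L : ℝ → ℝ := fun τ => ∫ s in (0:ℝ)..τ, N s with hLdef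
  have Lcont : ContinuousOn L (Set.Icc 0 1) := by
    have := intervalIntegral.continuousOn_primitive_interval' intN01 Set.left_mem_uIcc
    simpa [Set.uIcc_of_le (zero_le_one' ℝ)] using this
  have Lderiv : ∀ k (hk : k < m), ∀ s ∈ Set.Ioo (u k) (u (k + 1)), HasDerivAt L (N s) s := by
    intro k hk s hs
    have hsub : Set.uIcc (u k) s ⊆ Set.uIcc (u k) (u (k + 1)) := by
      rw [Set.uIcc_of_le hs.1.le, Set.uIcc_of_le (hlt k hk).le]
      exact Set.Icc_subset_Icc le_rfl hs.2.le
    have hint0s : IntervalIntegrable N volume 0 s :=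
      (intN0 k hk.le).trans ((intN k hk).mono_set hsub)
    have hmeas : StronglyMeasurableAtFilter N (nhds s) :=
      ((measurable_deriv γ).norm.aestronglyMeasurable).stronglyMeasurableAtFilter
    have hconts : ContinuousAt N s :=
      ((hPF k hk).2.1 s hs).continuousAt (isOpen_Ioo.mem_nhds hs)
    exact intervalIntegral.integral_hasDerivAt_right hint0s hmeas hconts
  have hcont_h : ContinuousOn h (Set.Icc 0 1) :=
    (Metric.continuous_infDist_pt P).comp_continuousOn hγc
  obtain ⟨B, hB⟩ := isCompact_Icc.exists_bound_of_continuousOn hcont_h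
  have hgint : ∀ k (hk : k < m), IntegrableOn (fun s => h s * N s) (Set.Icc (u k) (u (k + 1))) := by
    intro k hk
    rw [integrableOn_Icc_iff_integrableOn_Ioo]
    obtain ⟨C, hC⟩ := (hPF k hk).2.2.1
    refine Integrable.mono' (g := fun _ => B * C) ?_ ?_ ?_
    · exact integrableOn_const measure_Ioo_lt_top.ne
    · exact ((hcont_h.mono ((Set.Ioo_subset_Icc_self).trans (hpsub k))).aestronglyMeasurable
        measurableSet_Ioo).mul ((measurable_deriv γ).norm.aestronglyMeasurable.restrict)
    · refine (ae_restrict_iff' measurableSet_Ioo).2 (ae_of_all _ fun s hs => ?_)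
      have hb1 : ‖h s‖ ≤ B := hB s (hpsub k (Set.Ioo_subset_Icc_self hs))
      have hb2 : ‖N s‖ ≤ C := by
        rw [hNdef]; simpa [norm_norm] using hC s hs
      calc ‖h s * N s‖ = ‖h s‖ * ‖N s‖ := norm_mul _ _
        _ ≤ B * C := mul_le_mul hb1 hb2 (norm_nonneg _) ((norm_nonneg _).trans hb1)
  have hgiv : ∀ k, k < m → IntervalIntegrable (fun s => h s * N s) volume (u k) (u (k + 1)) :=
    fun k hk => (intervalIntegrable_iff_integrableOn_Icc_of_le (hlt k hk).le).2 (hgint k hk)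
  -- the function h + L increases along the path
  have hstep : ∀ k (hk : k < m), ∀ s ∈ Set.Icc (u k) (u (k + 1)),
      h (u k) + L (u k) ≤ h s + L s := by
    intro k hk s hs
    have hd1 : h (u k) ≤ h s + dist (γ (u k)) (γ s) := Metric.infDist_le_infDist_add_dist
    have hd2 : dist (γ (u k)) (γ s) = ‖γ s - γ (u k)‖ := by rw [dist_comm, dist_eq_norm]
    have hd3 : ‖γ s - γ (u k)‖ ≤ ∫ u' in (u k)..s, N u' := (hPF k hk).2.2.2.2 s hs
    have hsubint : IntervalIntegrable N volume (u k) s := by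
      refine (intN k hk).mono_set ?_
      rw [Set.uIcc_of_le hs.1, Set.uIcc_of_le (hlt k hk).le]
      exact Set.Icc_subset_Icc le_rfl hs.2
    have hd4 : L (u k) + ∫ u' in (u k)..s, N u' = L s :=
      intervalIntegral.integral_add_adjacent_intervals (intN0 k hk.le) hsubint
    rw [hd2] at hd1
    linarith
  have hA : ∀ k, k ≤ m → r0 ≤ h (u k) + L (u k) := by
    intro k
    induction k with
    | zero =>
      intro _
      rw [hu0]
      have hL0 : L 0 = 0 := intervalIntegral.integral_same
      have hh0 : h 0 = r0 := by rw [hhdef]; simp only; rw [h0]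
      rw [hL0, hh0, add_zero]
    | succ k ih =>
      intro hk
      have hk' : k < m := Nat.lt_of_succ_le hk
      have := hstep k hk' (u (k + 1)) (Set.right_mem_Icc.2 (hlt k hk').le)
      linarith [ih hk'.le]
  have hts : ∀ k (hk : k < m), ∀ s ∈ Set.Ioo (u k) (u (k + 1)), r0 ≤ h s + L s := fun k hk s hs =>
    (hA k hk.le).trans (hstep k hk s (Set.Ioo_subset_Icc_self hs))
  have hL1 : r0 ≤ L 1 := by
    have hAm := hA m le_rfl
    rw [hum] at hAm
    have hh1 : h 1 = 0 := by
      rw [hhdef]; simp only; rw [h1]; exact Metric.infDist_zero_of_mem hq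
    linarith
  -- the comparison function Φ
  set Φ : ℝ → ℝ := fun s => (r0 ^ 2 - max (r0 - s) 0 ^ 2) / 2 with hΦdef
  have hΦd : ∀ s, HasDerivAt Φ (max (r0 - s) 0) s := by
    intro s
    have hd1 : HasDerivAt (fun y : ℝ => r0 - y) (-1) s := by
      simpa using (hasDerivAt_id s).const_sub r0
    have hd2 : HasDerivAt (fun y : ℝ => max (r0 - y) 0 ^ 2) (2 * max (r0 - s) 0 * (-1)) s :=
      (hasDerivAt_sq_max (r0 - s)).comp s hd1
    have hd3 := ((hasDerivAt_const s (r0 ^ 2)).sub hd2).div_const 2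
    exact hd3.congr_deriv (by ring)
  have hΦc : Continuous Φ := by
    apply Continuous.div_const
    exact continuous_const.sub (((continuous_const.sub continuous_id).max continuous_const).pow 2)
  have key : ∀ k (hk : k < m),
      Φ (L (u (k + 1))) - Φ (L (u k)) ≤ ∫ s in (u k)..(u (k + 1)), h s * N s := by
    intro k hk
    refine intervalIntegral.sub_le_integral_of_hasDeriv_right_of_le (g' := fun s =>
        max (r0 - L s) 0 * N s) (hlt k hk).le
      (hΦc.comp_continuousOn (Lcont.mono (hpsub k)))
      (fun s hs => (((hΦd (L s)).comp s (Lderiv k hk s hs))).hasDerivWithinAt)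
      (hgint k hk) (fun s hs => ?_)
    have hmax : max (r0 - L s) 0 ≤ h s := by
      have hts' := hts k hk s hs
      have hh : 0 ≤ h s := Metric.infDist_nonneg
      exact max_le (by linarith) hh
    exact mul_le_mul_of_nonneg_right hmax (norm_nonneg _)
  have hsum : ∑ k ∈ Finset.range m, ∫ s in (u k)..(u (k + 1)), h s * N s
      = ∫ s in (0:ℝ)..1, h s * N s := by
    rw [intervalIntegral.sum_integral_adjacent_intervals (fun k hk => hgiv k hk), hu0, hum]
  have htel : ∑ k ∈ Finset.range m, (Φ (L (u (k + 1))) - Φ (L (u k)))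
      = Φ (L (u m)) - Φ (L (u 0)) := Finset.sum_range_sub (fun k => Φ (L (u k))) m
  have hΦ1 : Φ (L 1) = r0 ^ 2 / 2 := by
    have hm : max (r0 - L 1) 0 = 0 := max_eq_right (by linarith)
    rw [hΦdef]; simp only; rw [hm]
    ring
  have hΦ0 : Φ (L 0) = 0 := by
    have hL0 : L 0 = 0 := intervalIntegral.integral_same
    rw [hL0, hΦdef]; simp only
    rw [sub_zero, max_eq_left hr0nn]
    ring
  have hmain : Φ (L (u m)) - Φ (L (u 0)) ≤ ∫ s in (0:ℝ)..1, h s * N s := by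
    calc Φ (L (u m)) - Φ (L (u 0)) = ∑ k ∈ Finset.range m, (Φ (L (u (k + 1))) - Φ (L (u k))) :=
          htel.symm
      _ ≤ ∑ k ∈ Finset.range m, ∫ s in (u k)..(u (k + 1)), h s * N s :=
          Finset.sum_le_sum (fun k hk => key k (Finset.mem_range.1 hk))
      _ = ∫ s in (0:ℝ)..1, h s * N s := hsum
  rw [hum, hu0, hΦ1, hΦ0, sub_zero] at hmain
  have hnn : nnLength P γ = ∫ s in (0:ℝ)..1, h s * N s := rfl
  rw [ge_iff_le, hnn]
  calc (1 / 2) * r0 ^ 2 = r0 ^ 2 / 2 := by ring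
    _ ≤ ∫ s in (0:ℝ)..1, h s * N s := hmain
end
end
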